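/- For λ ∈ C̄, λ ≠ 0, every solution u ∈ X of a⁻u = λu (where a⁻φ = (Δφ)^{1/q}) has the form u(t) = μ^{−1} Σ_{n=0}^∞ c^{q^n} f_n(t) for some c ∈ C̄ with |c| < 1, where μ = λ^{q/(q−1)} for some choice of (q−1)-th root; conversely every such series defines an element of X satisfying a⁻u = λu. -/

import Mathlib

noncomputable section

open Filter Topology

/-- The bracket `[i] = x^{q^i} - x` as a polynomial over `F_q`. -/
def carBrP (Fq : Type*) [CommRing Fq] (q i : ℕ) : Polynomial Fq :=
  Polynomial.X ^ q ^ i - Polynomial.X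

/-- `D_0 = 1`, `D_i = [i] D_{i-1}^q`, as polynomials over `F_q`. -/
def carDP (Fq : Type*) [CommRing Fq] (q : ℕ) : ℕ → Polynomial Fq
  | 0 => 1
  | i + 1 => carBrP Fq q (i + 1) * (carDP Fq q i) ^ q

/-- The Carlitz polynomial function `e_i(t) = ∏_{m ∈ F_q[x], deg m < i} (t - m)`,
for `t ∈ O`, with values in `C̄`; here `σ : F_q[x] → O` and `ι : O → C̄` are the
structural embeddings, and the product runs over all polynomials `m` of degree `< i`,
enumerated by coefficient tuples. -/
def carE {Fq O Cbar : Type*} [Field Fq] [Fintype Fq] [CommRing O] [Field Cbar]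
    (σ : Polynomial Fq →+* O) (ι : O →+* Cbar) (i : ℕ) (t : O) : Cbar :=
  ∏ c : Fin i → Fq,
    (ι t - ι (σ (∑ k : Fin i, Polynomial.C (c k) * Polynomial.X ^ (k : ℕ))))

/-- The normalized Carlitz function `f_i(t) = e_i(t)/D_i`. -/
def carF {Fq O Cbar : Type*} [Field Fq] [Fintype Fq] [CommRing O] [Field Cbar]
    (q : ℕ) (σ : Polynomial Fq →+* O) (ι : O →+* Cbar) (i : ℕ) (t : O) : Cbar :=
  carE σ ι i t / ι (σ (carDP Fq q i))

/-- Membership in the space `X` of continuous `F_q`-linear functions `O → C̄`. -/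
def IsCarFun {Fq O Cbar : Type*} [Field Fq] [Fintype Fq] [CommRing O]
    [TopologicalSpace O] [Field Cbar] [TopologicalSpace Cbar]
    (σ : Polynomial Fq →+* O) (ι : O →+* Cbar) (φ : O → Cbar) : Prop :=
  Continuous φ ∧ (∀ t s : O, φ (t + s) = φ t + φ s) ∧
    ∀ (β : Fq) (t : O),
      φ (σ (Polynomial.C β) * t) = ι (σ (Polynomial.C β)) * φ t

/-- `φ = Σ c_i f_i` as a uniformly convergent series with `c_i → 0`. -/
def HasCarExpansion {O Cbar : Type*} [NormedField Cbar]
    (f : ℕ → O → Cbar) (φ : O → Cbar) (c : ℕ → Cbar) : Prop :=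
  Tendsto c atTop (𝓝 (0 : Cbar)) ∧
    TendstoUniformly (fun N t => ∑ i ∈ Finset.range N, c i * f i t) φ atTop

/-- The difference operator `(Δφ)(t) = φ(xt) - xφ(t)` on functions `O → C̄`. -/
def carDeltaFun {Fq O Cbar : Type*} [Field Fq] [Fintype Fq] [CommRing O] [Field Cbar]
    (σ : Polynomial Fq →+* O) (ι : O →+* Cbar) (φ : O → Cbar) : O → Cbar :=
  fun t => φ (σ Polynomial.X * t) - ι (σ Polynomial.X) * φ t

section CarlitzAux
set_option linter.unusedSectionVars false
set_option linter.unusedVariables false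

namespace CarAux

variable {Fq O Cbar : Type*} [Field Fq] [Fintype Fq] [CommRing O] [Field Cbar]

/-- polynomial with coefficients `c`. -/
def carM {i : ℕ} (c : Fin i → Fq) : Polynomial Fq :=
  ∑ k : Fin i, Polynomial.C (c k) * Polynomial.X ^ (k : ℕ)

variable (σ : Polynomial Fq →+* O) (ι : O →+* Cbar)

/-- the Carlitz product as a polynomial over `Cbar`. -/
def carEP (i : ℕ) : Polynomial Cbar :=
  ∏ c : Fin i → Fq, (Polynomial.X - Polynomial.C (ι (σ (carM c))))

lemma carM_coeff {i : ℕ} (c : Fin i → Fq) (j : ℕ) :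
    (carM c).coeff j = if h : j < i then c ⟨j, h⟩ else 0 := by
  classical
  rw [carM, Polynomial.finset_sum_coeff]
  by_cases h : j < i
  · rw [dif_pos h, Finset.sum_eq_single (⟨j, h⟩ : Fin i)]
    · simp
    · intro b _ hb
      simp only [Polynomial.coeff_C_mul, Polynomial.coeff_X_pow]
      rw [if_neg, mul_zero]
      intro hj; apply hb; ext; simp [hj]
    · simp
  · rw [dif_neg h]
    apply Finset.sum_eq_zero
    intro b _
    simp only [Polynomial.coeff_C_mul, Polynomial.coeff_X_pow]
    rw [if_neg, mul_zero]
    intro hj; exact h (hj ▸ b.isLt)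

lemma carM_inj {i : ℕ} : Function.Injective (carM (Fq := Fq) (i := i)) := by
  intro c c' h
  funext k
  have := congrArg (fun P => Polynomial.coeff P k) h
  simpa [carM_coeff, k.isLt] using this

lemma carM_degree {i : ℕ} (c : Fin i → Fq) : (carM c).degree < (i : ℕ) := by
  apply lt_of_le_of_lt (Polynomial.degree_sum_le _ _)
  rw [Finset.sup_lt_iff (by exact_mod_cast WithBot.bot_lt_coe (i : ℕ))]
  intro k _
  exact lt_of_le_of_lt (Polynomial.degree_C_mul_X_pow_le _ _) (by exact_mod_cast k.isLt)

lemma carM_eq_of_degree_lt {i : ℕ} (n : Polynomial Fq) (hn : n.degree < (i : ℕ)) :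
    carM (fun k : Fin i => n.coeff k) = n := by
  ext j
  rw [carM_coeff]
  by_cases h : j < i
  · rw [dif_pos h]
  · rw [dif_neg h]
    exact (Polynomial.coeff_eq_zero_of_degree_lt
      (lt_of_lt_of_le hn (by exact_mod_cast Nat.le_of_not_lt h))).symm

lemma carEP_monic (i : ℕ) : (carEP σ ι i).Monic :=
  Polynomial.monic_prod_of_monic _ _ fun c _ => Polynomial.monic_X_sub_C _

lemma carEP_natDegree {q : ℕ} (hcard : Fintype.card Fq = q) (i : ℕ) :
    (carEP σ ι i).natDegree = q ^ i := by
  rw [carEP, Polynomial.natDegree_prod_of_monic _ _ (fun c _ => Polynomial.monic_X_sub_C _)]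
  simp [Polynomial.natDegree_X_sub_C, Fintype.card_fun, hcard]

lemma carEP_eval_root {i : ℕ} (n : Polynomial Fq) (hn : n.degree < (i : ℕ)) :
    (carEP σ ι i).eval (ι (σ n)) = 0 := by
  rw [carEP, Polynomial.eval_prod]
  apply Finset.prod_eq_zero (Finset.mem_univ (fun k : Fin i => n.coeff k))
  rw [carM_eq_of_degree_lt n hn]
  simp

lemma carEP_shift {i : ℕ} (c₀ : Fin i → Fq) :
    (carEP σ ι i).comp (Polynomial.X + Polynomial.C (ι (σ (carM c₀)))) = carEP σ ι i := by
  rw [carEP, Polynomial.prod_comp]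
  rw [← Equiv.prod_comp (Equiv.subRight c₀) (fun c => Polynomial.X - Polynomial.C (ι (σ (carM c))))]
  apply Finset.prod_congr rfl
  intro c _
  have hm : carM ((Equiv.subRight c₀) c) = carM c - carM c₀ := by
    simp only [Equiv.subRight_apply, carM, ← Finset.sum_sub_distrib]
    apply Finset.sum_congr rfl
    intro k _
    rw [Pi.sub_apply, map_sub, sub_mul]
  rw [hm, map_sub, map_sub, Polynomial.sub_comp, Polynomial.X_comp, Polynomial.C_comp,
    Polynomial.C_sub]
  ring


variable {σ} {ι}

lemma carEP_eval_zero {i : ℕ} : (carEP σ ι i).eval 0 = 0 := by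
  have := carEP_eval_root σ ι (i := i) 0
    (by rw [Polynomial.degree_zero]; exact WithBot.bot_lt_coe _)
  simpa using this

lemma carEP_eval_add (hτ : Function.Injective fun P : Polynomial Fq => ι (σ P))
    {i : ℕ} (y z : Cbar) :
    (carEP σ ι i).eval (y + z) = (carEP σ ι i).eval y + (carEP σ ι i).eval z := by
  classical
  set E := carEP σ ι i with hE
  set n := (Fintype.card Fq) ^ i with hn
  have hmon : E.Monic := carEP_monic σ ι i
  have hdeg : E.natDegree = n := carEP_natDegree σ ι rfl i
  have hn1 : 1 ≤ n := Nat.one_le_pow _ _ Fintype.card_pos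
  set Q : Polynomial Cbar :=
    E.comp (Polynomial.X + Polynomial.C y) - E - Polynomial.C (E.eval y) with hQ
  have hQ0 : Q = 0 := by
    by_cases hz : Q = 0
    · exact hz
    apply Polynomial.eq_zero_of_natDegree_lt_card_of_eval_eq_zero Q
      (f := fun c : Fin i → Fq => ι (σ (carM c)))
      (fun c c' h => carM_inj (hτ h))
    · intro c
      have hshift : E.comp (Polynomial.X + Polynomial.C (ι (σ (carM c)))) = E :=
        carEP_shift σ ι c
      have h1 : E.eval (ι (σ (carM c)) + y) = E.eval y := by
        have := congrArg (Polynomial.eval y) hshift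
        rw [Polynomial.eval_comp] at this
        simpa [add_comm] using this
      have h2 : E.eval (ι (σ (carM c))) = 0 :=
        carEP_eval_root σ ι (carM c) (carM_degree c)
      simp [hQ, Polynomial.eval_comp, h1, h2]
    · have hcomp : (E.comp (Polynomial.X + Polynomial.C y)).Monic :=
        hmon.comp_X_add_C _
      have hdc : (E.comp (Polynomial.X + Polynomial.C y)).natDegree = n := by
        rw [Polynomial.natDegree_comp, Polynomial.natDegree_X_add_C, mul_one, hdeg]
      have hlt : (E.comp (Polynomial.X + Polynomial.C y) - E).degree < (n : ℕ) := by
        rcases eq_or_ne (E.comp (Polynomial.X + Polynomial.C y) - E) 0 with h | h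
        · rw [h, Polynomial.degree_zero]
          exact_mod_cast WithBot.bot_lt_coe (n : ℕ)
        · have := Polynomial.degree_sub_lt
            (by rw [Polynomial.degree_eq_natDegree hcomp.ne_zero,
              Polynomial.degree_eq_natDegree hmon.ne_zero, hdc, hdeg])
            hcomp.ne_zero
            (hcomp.leadingCoeff.trans hmon.leadingCoeff.symm)
          rwa [Polynomial.degree_eq_natDegree hcomp.ne_zero, hdc] at this
      have : Q.degree < (n : ℕ) := by
        rw [hQ]
        refine lt_of_le_of_lt (Polynomial.degree_sub_le _ _) (max_lt hlt ?_)
        exact lt_of_le_of_lt Polynomial.degree_C_le (by exact_mod_cast hn1)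
      rw [Fintype.card_fun, Fintype.card_fin, ← hn,
        Polynomial.natDegree_lt_iff_degree_lt hz]
      exact this
  have := congrArg (Polynomial.eval z) hQ0
  simp only [hQ, Polynomial.eval_sub, Polynomial.eval_comp, Polynomial.eval_add,
    Polynomial.eval_X, Polynomial.eval_C, Polynomial.eval_zero] at this
  rw [add_comm y z]
  linear_combination this


lemma carEP_eval_neg (hτ : Function.Injective fun P : Polynomial Fq => ι (σ P))
    {i : ℕ} (y : Cbar) : (carEP σ ι i).eval (-y) = -(carEP σ ι i).eval y := by
  have h := carEP_eval_add (σ := σ) (ι := ι) hτ (i := i) y (-y)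
  rw [add_neg_cancel, carEP_eval_zero] at h
  linear_combination -h

lemma carEP_eval_smul {q : ℕ} (hcard : Fintype.card Fq = q)
    {i : ℕ} (β : Fq) (z : Cbar) :
    (carEP σ ι i).eval (ι (σ (Polynomial.C β)) * z)
      = ι (σ (Polynomial.C β)) * (carEP σ ι i).eval z := by
  classical
  by_cases hβ : β = 0
  · subst hβ
    simp [carEP_eval_zero]
  · rw [carEP, Polynomial.eval_prod, Polynomial.eval_prod]
    have key : ∀ c : Fin i → Fq,
        ι (σ (Polynomial.C β)) * z - ι (σ (carM c))
          = ι (σ (Polynomial.C β)) * (z - ι (σ (carM (fun k => β⁻¹ * c k)))) := by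
      intro c
      have : carM (fun k => β⁻¹ * c k) = Polynomial.C β⁻¹ * carM c := by
        rw [carM, carM, Finset.mul_sum]
        apply Finset.sum_congr rfl
        intro k _
        rw [map_mul, mul_assoc]
      have hM : ι (σ (carM (fun k => β⁻¹ * c k)))
          = ι (σ (Polynomial.C β⁻¹)) * ι (σ (carM c)) := by
        rw [this, map_mul, map_mul]
      have hb : ι (σ (Polynomial.C β)) * ι (σ (Polynomial.C β⁻¹)) = 1 := by
        rw [← map_mul, ← map_mul, ← Polynomial.C_mul, mul_inv_cancel₀ hβ]
        simp
      rw [hM]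
      linear_combination (ι (σ (carM c))) * hb
    simp only [Polynomial.eval_sub, Polynomial.eval_X, Polynomial.eval_C]
    calc (∏ c : Fin i → Fq, (ι (σ (Polynomial.C β)) * z - ι (σ (carM c))))
        = ∏ c : Fin i → Fq,
            ι (σ (Polynomial.C β)) * (z - ι (σ (carM (fun k => β⁻¹ * c k)))) :=
          Finset.prod_congr rfl fun c _ => key c
      _ = ι (σ (Polynomial.C β)) ^ Fintype.card (Fin i → Fq)
            * ∏ c : Fin i → Fq, (z - ι (σ (carM (fun k => β⁻¹ * c k)))) := by
          rw [Finset.prod_mul_distrib, Finset.prod_const, Finset.card_univ]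
      _ = ι (σ (Polynomial.C β)) * ∏ c : Fin i → Fq, (z - ι (σ (carM c))) := by
          congr 1
          · rw [Fintype.card_fun, Fintype.card_fin, ← map_pow, ← map_pow, ← Polynomial.C_pow,
              FiniteField.pow_card_pow]
          · have hβ' : β⁻¹ ≠ 0 := inv_ne_zero hβ
            exact Equiv.prod_comp
              (Equiv.arrowCongr (Equiv.refl (Fin i)) (Equiv.mulLeft₀ β⁻¹ hβ'))
              (fun c => z - ι (σ (carM c)))

lemma carEP_prod_lin {q : ℕ} (hcard : Fintype.card Fq = q) (hq2 : 1 < q)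
    (hτ : Function.Injective fun P : Polynomial Fq => ι (σ P)) (Z a : Cbar) :
    ∏ β : Fq, (Z - ι (σ (Polynomial.C β)) * a) = Z ^ q - a ^ (q - 1) * Z := by
  classical
  by_cases ha : a = 0
  · subst ha
    rw [zero_pow (by omega : q - 1 ≠ 0)]
    simp [Finset.prod_const, Finset.card_univ, hcard]
  · set R : Polynomial Cbar :=
      (∏ β : Fq, (Polynomial.X - Polynomial.C (ι (σ (Polynomial.C β)) * a)))
        - (Polynomial.X ^ q - Polynomial.C (a ^ (q - 1)) * Polynomial.X) with hR
    have hmon1 : (∏ β : Fq, (Polynomial.X - Polynomial.C (ι (σ (Polynomial.C β)) * a))).Monic :=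
      Polynomial.monic_prod_of_monic _ _ fun β _ => Polynomial.monic_X_sub_C _
    have hdeg1 : (∏ β : Fq, (Polynomial.X - Polynomial.C (ι (σ (Polynomial.C β)) * a))).natDegree = q := by
      rw [Polynomial.natDegree_prod_of_monic _ _ (fun β _ => Polynomial.monic_X_sub_C _)]
      simp only [Polynomial.natDegree_X_sub_C]
      rw [Finset.sum_const, smul_eq_mul, mul_one, Finset.card_univ, hcard]
    have hR0 : R = 0 := by
      by_cases hz : R = 0
      · exact hz
      apply Polynomial.eq_zero_of_natDegree_lt_card_of_eval_eq_zero R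
        (f := fun β : Fq => ι (σ (Polynomial.C β)) * a)
        (fun β β' h => by
          have := mul_right_cancel₀ ha h
          have : Polynomial.C β = Polynomial.C β' := hτ this
          exact Polynomial.C_injective this)
      · intro γ
        have h1 : (∏ β : Fq, (Polynomial.X - Polynomial.C (ι (σ (Polynomial.C β)) * a))).eval
            (ι (σ (Polynomial.C γ)) * a) = 0 := by
          rw [Polynomial.eval_prod]
          apply Finset.prod_eq_zero (Finset.mem_univ γ)
          simp
        have h2 : (ι (σ (Polynomial.C γ))) ^ q = ι (σ (Polynomial.C γ)) := by
          rw [← map_pow, ← map_pow, ← Polynomial.C_pow, ← hcard, FiniteField.pow_card]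
        have h3 : a ^ (q - 1) * a = a ^ q := by
          rw [← pow_succ]; congr 1; omega
        simp only [hR, Polynomial.eval_sub, Polynomial.eval_pow, Polynomial.eval_mul,
          Polynomial.eval_X, Polynomial.eval_C, h1, mul_pow, h2]
        linear_combination (ι (σ (Polynomial.C γ))) * h3
      · rw [hcard]
        by_cases hz2 : R = 0
        · exact absurd hz2 hz
        rw [Polynomial.natDegree_lt_iff_degree_lt hz]
        have hlt2 : (Polynomial.C (a ^ (q - 1)) * Polynomial.X).degree
            < (Polynomial.X ^ q : Polynomial Cbar).degree := by
          rw [Polynomial.degree_X_pow]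
          refine lt_of_le_of_lt (Polynomial.degree_C_mul_X_le _) ?_
          exact_mod_cast hq2
        have hmon2 : (Polynomial.X ^ q - Polynomial.C (a ^ (q - 1)) * Polynomial.X
            : Polynomial Cbar).Monic := (Polynomial.monic_X_pow q).sub_of_left hlt2
        have hdeg2 : (Polynomial.X ^ q - Polynomial.C (a ^ (q - 1)) * Polynomial.X
            : Polynomial Cbar).natDegree = q := by
          rw [Polynomial.natDegree_sub_eq_left_of_natDegree_lt, Polynomial.natDegree_X_pow]
          rw [Polynomial.natDegree_X_pow]
          refine lt_of_le_of_lt (Polynomial.natDegree_C_mul_le _ _) ?_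
          rw [Polynomial.natDegree_X]
          omega
        have := Polynomial.degree_sub_lt
          (by rw [Polynomial.degree_eq_natDegree hmon1.ne_zero,
            Polynomial.degree_eq_natDegree hmon2.ne_zero, hdeg1, hdeg2])
          hmon1.ne_zero
          (hmon1.leadingCoeff.trans hmon2.leadingCoeff.symm)
        rwa [Polynomial.degree_eq_natDegree hmon1.ne_zero, hdeg1] at this
    have := congrArg (Polynomial.eval Z) hR0
    simp only [hR, Polynomial.eval_sub, Polynomial.eval_prod, Polynomial.eval_pow,
      Polynomial.eval_mul, Polynomial.eval_X, Polynomial.eval_C, Polynomial.eval_zero] at this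
    linear_combination this


lemma carM_snoc {i : ℕ} (c : Fin i → Fq) (β : Fq) :
    carM (Fin.snoc c β) = carM c + Polynomial.C β * Polynomial.X ^ i := by
  rw [carM, carM, Fin.sum_univ_castSucc]
  simp [Fin.snoc_castSucc, Fin.snoc_last]

lemma carEP_eval_succ {q : ℕ} (hcard : Fintype.card Fq = q) (hq2 : 1 < q)
    (hτ : Function.Injective fun P : Polynomial Fq => ι (σ P)) {i : ℕ} (y : Cbar) :
    (carEP σ ι (i+1)).eval y
      = ((carEP σ ι i).eval y) ^ q
        - ((carEP σ ι i).eval (ι (σ (Polynomial.X ^ i)))) ^ (q - 1)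
          * (carEP σ ι i).eval y := by
  classical
  have h1 : (carEP σ ι (i+1)).eval y
      = ∏ β : Fq, ((carEP σ ι i).eval y
          - ι (σ (Polynomial.C β)) * (carEP σ ι i).eval (ι (σ (Polynomial.X ^ i)))) := by
    rw [carEP, Polynomial.eval_prod]
    rw [← Equiv.prod_comp (Fin.snocEquiv (fun _ => Fq))
      (fun c : Fin (i+1) → Fq => Polynomial.eval y (Polynomial.X - Polynomial.C (ι (σ (carM c)))))]
    rw [Fintype.prod_prod_type]
    apply Finset.prod_congr rfl
    intro β _
    have inner : ∀ c : Fin i → Fq,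
        Polynomial.eval y (Polynomial.X - Polynomial.C (ι (σ (carM (Fin.snocEquiv (fun _ => Fq) (β, c))))))
          = (y - ι (σ (Polynomial.C β)) * ι (σ (Polynomial.X ^ i))) - ι (σ (carM c)) := by
      intro c
      have : Fin.snocEquiv (fun _ => Fq) (β, c) = Fin.snoc c β := rfl
      rw [this, carM_snoc, map_add, map_add, map_mul, map_mul]
      simp only [Polynomial.eval_sub, Polynomial.eval_X, Polynomial.eval_C]
      ring
    calc (∏ c : Fin i → Fq,
          Polynomial.eval y (Polynomial.X - Polynomial.C (ι (σ (carM (Fin.snocEquiv (fun _ => Fq) (β, c)))))))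
        = ∏ c : Fin i → Fq,
            ((y - ι (σ (Polynomial.C β)) * ι (σ (Polynomial.X ^ i))) - ι (σ (carM c))) :=
          Finset.prod_congr rfl fun c _ => inner c
      _ = (carEP σ ι i).eval (y - ι (σ (Polynomial.C β)) * ι (σ (Polynomial.X ^ i))) := by
          rw [carEP, Polynomial.eval_prod]
          simp
      _ = (carEP σ ι i).eval y
            - ι (σ (Polynomial.C β)) * (carEP σ ι i).eval (ι (σ (Polynomial.X ^ i))) := by
          rw [sub_eq_add_neg, carEP_eval_add hτ, carEP_eval_neg hτ, carEP_eval_smul hcard,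
            sub_eq_add_neg]
  rw [h1, carEP_prod_lin hcard hq2 hτ]


lemma carEP_zero : carEP σ ι 0 = Polynomial.X := by
  rw [carEP]
  rw [Fintype.prod_subsingleton _ (fun _ => (0:Fq))]
  simp [carM]

variable {p γ q : ℕ}

lemma carKey [CharP Cbar p] (hp : p.Prime) (hγ : 0 < γ) (hq : q = p ^ γ)
    (hcard : Fintype.card Fq = q)
    (hτ : Function.Injective fun P : Polynomial Fq => ι (σ P)) : ∀ i : ℕ,
    (∀ y : Cbar, (carEP σ ι (i+1)).eval (ι (σ Polynomial.X) * y)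
        = ι (σ Polynomial.X) * (carEP σ ι (i+1)).eval y
          + ι (σ (carBrP Fq q (i+1))) * ((carEP σ ι i).eval y) ^ q)
      ∧ (carEP σ ι i).eval (ι (σ (Polynomial.X ^ i))) = ι (σ (carDP Fq q i)) := by
  haveI : Fact p.Prime := ⟨hp⟩
  have hq2 : 1 < q := hq ▸ Nat.one_lt_pow hγ.ne' hp.one_lt
  have frob : ∀ a b : Cbar, (a + b) ^ q = a ^ q + b ^ q := by
    intro a b; rw [hq]; exact add_pow_char_pow (p := p) a b γ
  have frobsub : ∀ a b : Cbar, (a - b) ^ q = a ^ q - b ^ q := by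
    intro a b; rw [hq]; exact sub_pow_char_pow (p := p) a b γ
  have hBr : ∀ j : ℕ, ι (σ (carBrP Fq q j)) = (ι (σ Polynomial.X)) ^ q ^ j - ι (σ Polynomial.X) := by
    intro j; rw [carBrP, map_sub, map_sub, map_pow, map_pow]
  intro i
  induction i with
  | zero =>
    constructor
    · intro y
      have e0 : ∀ z : Cbar, (carEP σ ι 0).eval z = z := by
        intro z; rw [carEP_zero]; simp
      have e1 : ∀ z : Cbar, (carEP σ ι 1).eval z = z ^ q - z := by
        intro z
        have h1 : ι (σ ((Polynomial.X : Polynomial Fq) ^ 0)) = 1 := by simp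
        rw [carEP_eval_succ hcard hq2 hτ, e0, e0, h1, one_pow, one_mul]
      rw [e1, e1, e0, hBr 1, pow_one, mul_pow]
      ring
    · rw [pow_zero, carEP_zero, carDP]
      simp
  | succ i ih =>
    obtain ⟨ihc, ihd⟩ := ih
    set x := ι (σ (Polynomial.X : Polynomial Fq)) with hx
    set a := (carEP σ ι i).eval (ι (σ (Polynomial.X ^ i))) with ha
    -- the D-recursion at level i+1
    have hD : (carEP σ ι (i+1)).eval (ι (σ (Polynomial.X ^ (i+1))))
        = ι (σ (carDP Fq q (i+1))) := by
      have hxy : ι (σ (Polynomial.X ^ (i+1))) = x * ι (σ (Polynomial.X ^ i)) := by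
        rw [hx, ← map_mul, ← map_mul, ← pow_succ']
      have hvan : (carEP σ ι (i+1)).eval (ι (σ (Polynomial.X ^ i))) = 0 :=
        carEP_eval_root σ ι _ (by
          rw [Polynomial.degree_X_pow]
          exact_mod_cast Nat.lt_succ_self i)
      have ihd' : (carEP σ ι i).eval (ι (σ (Polynomial.X ^ i))) = ι (σ (carDP Fq q i)) := ihd
      rw [hxy, ihc, hvan, mul_zero, zero_add, ihd', carDP]
      simp [map_mul, map_pow]
    refine ⟨?_, hD⟩
    intro y
    set A := (carEP σ ι (i+1)).eval (ι (σ (Polynomial.X ^ (i+1)))) with hA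
    set B := ι (σ (carBrP Fq q (i+1))) with hB
    set B2 := ι (σ (carBrP Fq q (i+2))) with hB2
    set u := (carEP σ ι (i+1)).eval y with hu
    set v := (carEP σ ι i).eval y with hv
    have key : ∀ w : Cbar, (carEP σ ι (i+2)).eval w
        = ((carEP σ ι (i+1)).eval w) ^ q - A ^ (q-1) * (carEP σ ι (i+1)).eval w :=
      fun w => carEP_eval_succ hcard hq2 hτ w
    have key1 : ∀ w : Cbar, (carEP σ ι (i+1)).eval w
        = ((carEP σ ι i).eval w) ^ q - a ^ (q-1) * (carEP σ ι i).eval w :=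
      fun w => carEP_eval_succ hcard hq2 hτ w
    have h2 : (carEP σ ι (i+1)).eval (x * y) = x * u + B * v ^ q := ihc y
    have hA' : A = B * (ι (σ (carDP Fq q i))) ^ q := by
      rw [hD, carDP, hB]; simp [map_mul, map_pow]
    have hAB : A = B * a ^ q := by rw [hA', ← ihd]
    have P1 : (x * u + B * v ^ q) ^ q = x ^ q * u ^ q + B ^ q * (v ^ q) ^ q := by
      rw [frob, mul_pow, mul_pow]
    have P2 : u ^ q = (v ^ q) ^ q - (a ^ (q-1)) ^ q * v ^ q := by
      rw [hu, key1 y, ← hv, frobsub, mul_pow]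
    have P3 : A ^ (q-1) = B ^ (q-1) * (a ^ q) ^ (q-1) := by rw [hAB, mul_pow]
    have P4 : B ^ (q-1) * B = B ^ q := by
      rw [← pow_succ]; congr 1; omega
    have P5 : (a ^ (q-1)) ^ q = (a ^ q) ^ (q-1) := pow_right_comm a _ _
    have P6 : B2 = B ^ q + x ^ q - x := by
      rw [hB2, hB, hBr, hBr, frobsub]
      rw [← pow_mul, ← pow_succ]
      ring
    rw [key, key, h2, P1, ← hu, P3]
    linear_combination (-(B ^ q)) * P2 - (u ^ q) * P6 + (B ^ q * v ^ q) * P5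
      - ((a ^ q) ^ (q-1) * v ^ q) * P4


lemma carBrP_ne_zero (hq2 : 1 < q) {i : ℕ} (hi : 0 < i) : carBrP Fq q i ≠ 0 := by
  intro h
  have h2 : (Polynomial.X : Polynomial Fq) ^ q ^ i = Polynomial.X := by
    have := sub_eq_zero.mp h
    exact this
  have h3 := congrArg Polynomial.natDegree h2
  rw [Polynomial.natDegree_X_pow, Polynomial.natDegree_X] at h3
  have h4 : q ^ 1 ≤ q ^ i := Nat.pow_le_pow_right (by omega) hi
  rw [pow_one] at h4
  omega

lemma carDP_ne_zero (hq2 : 1 < q) : ∀ i : ℕ, carDP Fq q i ≠ 0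
  | 0 => one_ne_zero
  | i + 1 => by
    rw [carDP]
    exact mul_ne_zero (carBrP_ne_zero hq2 i.succ_pos)
      (pow_ne_zero _ (carDP_ne_zero hq2 i))


section Ffacts

variable [CharP Cbar p]
variable (hp : p.Prime) (hγ : 0 < γ) (hq : q = p ^ γ) (hcard : Fintype.card Fq = q)
  (hτ : Function.Injective fun P : Polynomial Fq => ι (σ P))

lemma carE_eq (i : ℕ) (t : O) : carE σ ι i t = (carEP σ ι i).eval (ι t) := by
  rw [carEP, Polynomial.eval_prod, carE]
  apply Finset.prod_congr rfl
  intro c _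
  rw [Polynomial.eval_sub, Polynomial.eval_X, Polynomial.eval_C, carM]

include hq hp hγ

lemma hq2' : 1 < q := hq ▸ Nat.one_lt_pow hγ.ne' hp.one_lt

include hcard hτ

lemma tauD_ne_zero (i : ℕ) : ι (σ (carDP Fq q i)) ≠ 0 := fun h => by
  have h0 : ι (σ (0 : Polynomial Fq)) = 0 := by simp
  exact carDP_ne_zero (hq2' hp hγ hq) i (hτ (h.trans h0.symm))

lemma tauBr_ne_zero {i : ℕ} (hi : 0 < i) : ι (σ (carBrP Fq q i)) ≠ 0 := fun h => by
  have h0 : ι (σ (0 : Polynomial Fq)) = 0 := by simp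
  exact carBrP_ne_zero (hq2' hp hγ hq) hi (hτ (h.trans h0.symm))

lemma fdelta (i : ℕ) (t : O) :
    carF q σ ι (i+1) (σ Polynomial.X * t)
      = ι (σ Polynomial.X) * carF q σ ι (i+1) t + (carF q σ ι i t) ^ q := by
  have hkey := (carKey hp hγ hq hcard hτ i).1 (ι t)
  have hsplit : ι (σ (carDP Fq q (i+1)))
      = ι (σ (carBrP Fq q (i+1))) * (ι (σ (carDP Fq q i))) ^ q := by
    rw [carDP, map_mul, map_mul, map_pow, map_pow]
  rw [carF, carF, carF, carE_eq, carE_eq, carE_eq, map_mul, hkey, hsplit, add_div]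
  congr 1
  · rw [mul_div_assoc]
  · rw [div_pow, mul_div_mul_left _ _ (tauBr_ne_zero hp hγ hq hcard hτ i.succ_pos)]

lemma fdelta0 (t : O) :
    carF q σ ι 0 (σ Polynomial.X * t) = ι (σ Polynomial.X) * carF q σ ι 0 t := by
  rw [carF, carF, carE_eq, carE_eq, carEP_zero, map_mul]
  simp [mul_div_assoc]

lemma fvanish {i j : ℕ} (hij : j < i) : carF q σ ι i (σ (Polynomial.X ^ j)) = 0 := by
  rw [carF, carE_eq, carEP_eval_root σ ι _ (by
    rw [Polynomial.degree_X_pow]; exact_mod_cast hij), zero_div]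

lemma fdiag (i : ℕ) : carF q σ ι i (σ (Polynomial.X ^ i)) = 1 := by
  rw [carF, carE_eq, (carKey hp hγ hq hcard hτ i).2,
    div_self (tauD_ne_zero hp hγ hq hcard hτ i)]

omit hp hγ hq hcard in
lemma fadd (i : ℕ) (t s : O) :
    carF q σ ι i (t + s) = carF q σ ι i t + carF q σ ι i s := by
  rw [carF, carF, carF, carE_eq, carE_eq, carE_eq, map_add, carEP_eval_add hτ, add_div]

omit hp hγ hq hτ in
lemma fsmul (i : ℕ) (β : Fq) (t : O) :
    carF q σ ι i (σ (Polynomial.C β) * t)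
      = ι (σ (Polynomial.C β)) * carF q σ ι i t := by
  rw [carF, carF, carE_eq, carE_eq, map_mul, carEP_eval_smul hcard, mul_div_assoc]

omit hp hγ hq hcard hτ in
lemma fcont [TopologicalSpace O] [TopologicalSpace Cbar] [IsTopologicalRing Cbar]
    (hι : Continuous ι) (i : ℕ) : Continuous (fun t => carF q σ ι i t) := by
  have : Continuous (fun t => carE σ ι i t) := by
    have he : (fun t : O => carE σ ι i t)
        = fun t => ∏ c : Fin i → Fq, (ι t - ι (σ (carM c))) := rfl
    rw [he]
    apply continuous_finset_prod
    intro c _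
    exact hι.sub continuous_const
  simpa [carF, div_eq_mul_inv, Pi.mul_def] using this.mul continuous_const

lemma shift_sum (c : ℕ → Cbar) (t : O) : ∀ N : ℕ,
    ∑ i ∈ Finset.range (N+1), c i * carF q σ ι i (σ Polynomial.X * t)
      = ι (σ Polynomial.X) * ∑ i ∈ Finset.range (N+1), c i * carF q σ ι i t
        + ∑ i ∈ Finset.range N, c (i+1) * (carF q σ ι i t) ^ q := by
  intro N
  induction N with
  | zero =>
    simp only [zero_add, Finset.sum_range_one, Finset.range_zero,
      Finset.sum_empty, add_zero]
    rw [fdelta0 hp hγ hq hcard hτ]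
    ring
  | succ N ih =>
    rw [Finset.sum_range_succ (fun i => c i * carF q σ ι i (σ Polynomial.X * t)) (N+1),
      ih, fdelta hp hγ hq hcard hτ N t,
      Finset.sum_range_succ (fun i => c i * carF q σ ι i t) (N+1),
      Finset.sum_range_succ (fun i => c (i+1) * (carF q σ ι i t) ^ q) N]
    ring

omit hcard hτ in
lemma frob_sum (g : ℕ → Cbar) (N : ℕ) :
    (∑ i ∈ Finset.range N, g i) ^ q = ∑ i ∈ Finset.range N, (g i) ^ q := by
  haveI : Fact p.Prime := ⟨hp⟩
  subst hq
  simpa only [iterateFrobenius_def] using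
    map_sum (iterateFrobenius Cbar p γ) g (Finset.range N)

end Ffacts

end CarAux

end CarlitzAux

/- STATEMENT 18: For λ ∈ C̄, λ ≠ 0, every u ∈ X with a⁻u = λu (equivalently
   Δu = (λu)^q pointwise) and Carlitz expansion u = Σ c_n f_n has coefficients
   c_n = μ⁻¹ (c₀ μ)^{q^n} = μ⁻¹ c^{q^n} for some (q-1)-th root μ of λ^q (i.e.
   μ = λ^{q/(q-1)}) and some c with ‖c‖ < 1; conversely, for any such μ and c,
   any u ∈ C(O,C̄) whose Carlitz expansion has coefficients μ⁻¹ c^{q^n} lies in X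
   and satisfies a⁻u = λu. -/

theorem carlitz_coherent_states
    (p γ : ℕ) (hp : p.Prime) (hγ : 0 < γ) (q : ℕ) (hq : q = p ^ γ)
    (Fq : Type*) [Field Fq] [Fintype Fq] (hcard : Fintype.card Fq = q)
    (O : Type*) [CommRing O] [TopologicalSpace O] [IsTopologicalRing O]
    [CompactSpace O] [T2Space O]
    (Cbar : Type*) [NormedField Cbar] [CompleteSpace Cbar] [IsAlgClosed Cbar]
    [CharP Cbar p]
    (hna : ∀ a b : Cbar, ‖a + b‖ ≤ max ‖a‖ ‖b‖)
    (σ : Polynomial Fq →+* O) (hσdense : DenseRange σ) (hσinj : Function.Injective σ)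
    (ι : O →+* Cbar) (hι : IsInducing ι)
    (hnorm : ∀ P : Polynomial Fq, P ≠ 0 →
      ‖ι (σ P)‖ = (q : ℝ) ^ (-(P.rootMultiplicity 0) : ℤ))
    (lam : Cbar) (hlam : lam ≠ 0) :
    (∀ (u : O → Cbar) (c : ℕ → Cbar), IsCarFun σ ι u →
        HasCarExpansion (carF q σ ι) u c →
        (∀ t : O, carDeltaFun σ ι u t = (lam * u t) ^ q) →
        ∃ μ c₀ : Cbar, μ ^ (q - 1) = lam ^ q ∧ ‖c₀‖ < 1 ∧
          ∀ n : ℕ, c n = μ⁻¹ * c₀ ^ q ^ n) ∧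
      ∀ (μ c₀ : Cbar), μ ^ (q - 1) = lam ^ q → ‖c₀‖ < 1 →
        ∀ u : O → Cbar,
          HasCarExpansion (carF q σ ι) u (fun n => μ⁻¹ * c₀ ^ q ^ n) →
          IsCarFun σ ι u ∧ ∀ t : O, carDeltaFun σ ι u t = (lam * u t) ^ q := by
  classical
  have hq2 : 1 < q := hq ▸ Nat.one_lt_pow hγ.ne' hp.one_lt
  have hτ : Function.Injective fun P : Polynomial Fq => ι (σ P) := by
    intro P Q h
    by_contra hne
    have hPQ : P - Q ≠ 0 := sub_ne_zero.mpr hne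
    have h0 : ι (σ (P - Q)) = 0 := by
      rw [map_sub, map_sub]
      simp only at h
      rw [h, sub_self]
    have hn := hnorm (P - Q) hPQ
    rw [h0, norm_zero] at hn
    have : ((q : ℝ)) ^ (-((P - Q).rootMultiplicity 0) : ℤ) ≠ 0 :=
      zpow_ne_zero _ (by exact_mod_cast (by omega : q ≠ 0))
    exact this hn.symm
  have hμrel : ∀ μ : Cbar, μ ^ (q-1) = lam ^ q → μ ≠ 0 := by
    intro μ hμ h
    rw [h, zero_pow (by omega : q - 1 ≠ 0)] at hμ
    exact pow_ne_zero q hlam hμ.symm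
  constructor
  · -- forward direction
    intro u c hu hexp heq
    have hpt : ∀ t, Tendsto (fun N => ∑ i ∈ Finset.range N, c i * carF q σ ι i t)
        atTop (𝓝 (u t)) := fun t => hexp.2.tendsto_at t
    have hval : ∀ j, u (σ (Polynomial.X ^ j))
        = ∑ i ∈ Finset.range (j+1), c i * carF q σ ι i (σ (Polynomial.X ^ j)) := by
      intro j
      have hconst : ∀ N, j+1 ≤ N →
          (∑ i ∈ Finset.range N, c i * carF q σ ι i (σ (Polynomial.X ^ j)))
            = ∑ i ∈ Finset.range (j+1), c i * carF q σ ι i (σ (Polynomial.X ^ j)) := by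
        intro N hN
        symm
        apply Finset.sum_subset (Finset.range_subset_range.mpr hN)
        intro i hi hni
        have hji : j < i := by
          simp only [Finset.mem_range] at hni
          omega
        rw [CarAux.fvanish hp hγ hq hcard hτ hji, mul_zero]
      refine tendsto_nhds_unique (hpt _) ?_
      apply Tendsto.congr' _ (tendsto_const_nhds
        (x := ∑ i ∈ Finset.range (j+1), c i * carF q σ ι i (σ (Polynomial.X ^ j))))
      filter_upwards [eventually_ge_atTop (j+1)] with N hN
      exact (hconst N hN).symm
    have heqj : ∀ j, ∑ i ∈ Finset.range (j+1),
          c (i+1) * (carF q σ ι i (σ (Polynomial.X ^ j))) ^ q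
        = ∑ i ∈ Finset.range (j+1),
            lam ^ q * (c i) ^ q * (carF q σ ι i (σ (Polynomial.X ^ j))) ^ q := by
      intro j
      have hΔ := heq (σ (Polynomial.X ^ j))
      rw [carDeltaFun] at hΔ
      have hmulpt : σ Polynomial.X * σ (Polynomial.X ^ j) = σ (Polynomial.X ^ (j+1)) := by
        rw [← map_mul, ← pow_succ']
      have hL : u (σ Polynomial.X * σ (Polynomial.X ^ j))
            - ι (σ Polynomial.X) * u (σ (Polynomial.X ^ j))
          = ∑ i ∈ Finset.range (j+1),
              c (i+1) * (carF q σ ι i (σ (Polynomial.X ^ j))) ^ q := by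
        have hs := CarAux.shift_sum hp hγ hq hcard hτ c (σ (Polynomial.X ^ j)) (j+1)
        have hdrop : ∑ i ∈ Finset.range (j+2), c i * carF q σ ι i (σ (Polynomial.X ^ j))
            = ∑ i ∈ Finset.range (j+1), c i * carF q σ ι i (σ (Polynomial.X ^ j)) := by
          rw [Finset.sum_range_succ, CarAux.fvanish hp hγ hq hcard hτ (Nat.lt_succ_self j),
            mul_zero, add_zero]
        rw [hmulpt, hval (j+1), hval j, ← hmulpt]
        rw [show j + 1 + 1 = j + 2 from rfl] at hs
        rw [hs, hdrop]
        ring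
      have hR : (lam * u (σ (Polynomial.X ^ j))) ^ q
          = ∑ i ∈ Finset.range (j+1),
              lam ^ q * (c i) ^ q * (carF q σ ι i (σ (Polynomial.X ^ j))) ^ q := by
        rw [hval j, mul_pow, CarAux.frob_sum hp hγ hq, Finset.mul_sum]
        apply Finset.sum_congr rfl
        intro i _
        rw [mul_pow]
        ring
      rw [← hL, ← hR]
      exact hΔ
    have hrec : ∀ j, c (j+1) = lam ^ q * (c j) ^ q := by
      intro j
      induction j using Nat.strong_induction_on with
      | _ j IH =>
        have hj := heqj j
        have hj' : ∑ i ∈ Finset.range (j+1),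
            (c (i+1) - lam ^ q * (c i) ^ q)
              * (carF q σ ι i (σ (Polynomial.X ^ j))) ^ q = 0 := by
          have h0 := sub_eq_zero.mpr hj
          rw [← Finset.sum_sub_distrib] at h0
          rw [← h0]
          apply Finset.sum_congr rfl
          intro i _
          ring
        rw [Finset.sum_range_succ, Finset.sum_eq_zero, zero_add,
          CarAux.fdiag hp hγ hq hcard hτ j, one_pow, mul_one] at hj'
        · exact sub_eq_zero.mp hj'
        · intro i hi
          rw [IH i (Finset.mem_range.mp hi), sub_self, zero_mul]
    obtain ⟨μ, hμ⟩ := IsAlgClosed.exists_pow_nat_eq (lam ^ q) (by omega : 0 < q - 1)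
    have hμ0 : μ ≠ 0 := hμrel μ hμ
    by_cases hc0 : c 0 = 0
    · refine ⟨μ, 0, hμ, by simp, ?_⟩
      have hall : ∀ n, c n = 0 := by
        intro n
        induction n with
        | zero => exact hc0
        | succ n ih => rw [hrec n, ih, zero_pow (by omega : q ≠ 0), mul_zero]
      intro n
      rw [hall n, zero_pow (by positivity : q ^ n ≠ 0), mul_zero]
    · have hform : ∀ n, c n = μ⁻¹ * (μ * c 0) ^ q ^ n := by
        intro n
        induction n with
        | zero => rw [pow_zero, pow_one, ← mul_assoc, inv_mul_cancel₀ hμ0, one_mul]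
        | succ n ih =>
          rw [hrec n, ih]
          have hstep : lam ^ q * μ⁻¹ ^ q = μ⁻¹ := by
            rw [← hμ]
            field_simp
            rw [← pow_succ]
            congr 1
            rw [Nat.sub_add_cancel (by omega : 1 ≤ q), one_div, inv_pow, mul_inv_cancel₀ (pow_ne_zero _ hμ0)]
          rw [mul_pow, ← pow_mul, ← pow_succ, ← mul_assoc, hstep]
      refine ⟨μ, μ * c 0, hμ, ?_, hform⟩
      by_contra hge
      push_neg at hge
      have hpos : 0 < ‖μ⁻¹‖ := by
        rw [norm_pos_iff]
        exact inv_ne_zero hμ0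
      have hev := NormedAddCommGroup.tendsto_nhds_zero.mp hexp.1 ‖μ⁻¹‖ hpos
      obtain ⟨n, hn⟩ := hev.exists
      have : ‖μ⁻¹‖ ≤ ‖c n‖ := by
        rw [hform n, norm_mul, norm_pow]
        nlinarith [one_le_pow₀ hge (n := q ^ n), norm_nonneg (μ * c 0)]
      linarith
  · -- converse direction
    intro μ c₀ hμpow hc₀ u hexp
    have hμ0 : μ ≠ 0 := hμrel μ hμpow
    set cc : ℕ → Cbar := fun n => μ⁻¹ * c₀ ^ q ^ n with hcc
    have hcrel : ∀ n, cc (n+1) = lam ^ q * (cc n) ^ q := by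
      intro n
      have hstep : lam ^ q * μ⁻¹ ^ q = μ⁻¹ := by
        rw [← hμpow]
        field_simp
        rw [← pow_succ]
        congr 1
        rw [Nat.sub_add_cancel (by omega : 1 ≤ q), one_div, inv_pow, mul_inv_cancel₀ (pow_ne_zero _ hμ0)]
      simp only [hcc]
      rw [mul_pow, ← pow_mul, ← pow_succ, ← mul_assoc, hstep]
    have hpt : ∀ t, Tendsto (fun N => ∑ i ∈ Finset.range N, cc i * carF q σ ι i t)
        atTop (𝓝 (u t)) := fun t => hexp.2.tendsto_at t
    constructor
    · refine ⟨?_, ?_, ?_⟩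
      · apply hexp.2.continuous
        apply Filter.Eventually.frequently
        filter_upwards with N
        apply continuous_finset_sum
        intro i _
        exact continuous_const.mul (CarAux.fcont hι.continuous i)
      · intro t s
        refine tendsto_nhds_unique (hpt (t+s)) ?_
        have hsum : (fun N => ∑ i ∈ Finset.range N, cc i * carF q σ ι i (t+s))
            = fun N => (∑ i ∈ Finset.range N, cc i * carF q σ ι i t)
              + ∑ i ∈ Finset.range N, cc i * carF q σ ι i s := by
          funext N
          rw [← Finset.sum_add_distrib]
          apply Finset.sum_congr rfl
          intro i _
          rw [CarAux.fadd hτ i t s]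
          ring
        rw [hsum]
        exact (hpt t).add (hpt s)
      · intro β t
        refine tendsto_nhds_unique (hpt (σ (Polynomial.C β) * t)) ?_
        have hsum : (fun N => ∑ i ∈ Finset.range N, cc i * carF q σ ι i (σ (Polynomial.C β) * t))
            = fun N => ι (σ (Polynomial.C β)) * ∑ i ∈ Finset.range N, cc i * carF q σ ι i t := by
          funext N
          rw [Finset.mul_sum]
          apply Finset.sum_congr rfl
          intro i _
          rw [CarAux.fsmul hcard i β t]
          ring
        rw [hsum]
        exact (hpt t).const_mul _
    · intro t
      rw [carDeltaFun]
      have h1 : Tendsto (fun N => ∑ i ∈ Finset.range (N+1), cc i * carF q σ ι i (σ Polynomial.X * t))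
          atTop (𝓝 (u (σ Polynomial.X * t))) :=
        (hpt _).comp (tendsto_add_atTop_nat 1)
      have h2 : Tendsto (fun N => ι (σ Polynomial.X) * ∑ i ∈ Finset.range (N+1), cc i * carF q σ ι i t)
          atTop (𝓝 (ι (σ Polynomial.X) * u t)) :=
        ((hpt t).comp (tendsto_add_atTop_nat 1)).const_mul _
      have h3 : Tendsto (fun N => ∑ i ∈ Finset.range N, cc (i+1) * (carF q σ ι i t) ^ q)
          atTop (𝓝 (u (σ Polynomial.X * t) - ι (σ Polynomial.X) * u t)) := by
        apply (h1.sub h2).congr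
        intro N
        have hs := CarAux.shift_sum hp hγ hq hcard hτ cc t N
        rw [hs]
        ring
      have h4 : Tendsto (fun N => ∑ i ∈ Finset.range N, cc (i+1) * (carF q σ ι i t) ^ q)
          atTop (𝓝 ((lam * u t) ^ q)) := by
        have h5 : (fun N => ∑ i ∈ Finset.range N, cc (i+1) * (carF q σ ι i t) ^ q)
            = fun N => lam ^ q * (∑ i ∈ Finset.range N, cc i * carF q σ ι i t) ^ q := by
          funext N
          rw [CarAux.frob_sum hp hγ hq, Finset.mul_sum]
          apply Finset.sum_congr rfl
          intro i _
          rw [hcrel i, mul_pow]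
          ring
        rw [h5, mul_pow]
        exact ((hpt t).pow q).const_mul _
      exact tendsto_nhds_unique h3 h4
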